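/- For nonnegative integers z_1, ..., z_d with h = z_1 + ··· + z_d and real x with x > 2d, the following integral identity holds: ∫_0^∞ e^{-xt} ∏_{j=1}^d I_{z_j}(2t) dt = x^{-(h+1)} ∑_{n≥0} A(n) · ((h/2+1/2)_n (h/2+1)_n / (h+1)_n) · (4/x²)^n / n!, where A(n) = ∑_{n_1+···+n_d = n} C(n; n_1,...,n_d) · C(n+h; n_1+z_1,...,n_d+z_d) is a sum of products of multinomial coefficients. -/

import Mathlib

open MeasureTheory
open scoped ENNReal

/-- The modified Bessel function of the first kind of nonnegative integer order `z`. -/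
noncomputable def besselI (z : ℕ) (t : ℝ) : ℝ :=
  ∑' n : ℕ, (t / 2) ^ (2 * n + z) / (n.factorial * (n + z).factorial)

/-- The Pochhammer symbol `(a)_n = a(a+1)⋯(a+n-1)`. -/
noncomputable def poch (a : ℝ) (n : ℕ) : ℝ := ∏ i ∈ Finset.range n, (a + i)

/-- `A^{(d)}_z(n) = ∑_{n_1+⋯+n_d=n} C(n;n_1,…,n_d) C(n+|z|; n_1+z_1,…,n_d+z_d)`. -/
def Acoef (d : ℕ) (z : Fin d → ℕ) (n : ℕ) : ℕ :=
  ∑ p ∈ Finset.Nat.antidiagonalTuple d n,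
    Nat.multinomial Finset.univ p * Nat.multinomial Finset.univ (fun j => p j + z j)

lemma poch_succ (a : ℝ) (n : ℕ) : poch a (n+1) = poch a n * (a + n) := by
  simp [poch, Finset.prod_range_succ]

lemma poch_pos {a : ℝ} (ha : 0 < a) (n : ℕ) : 0 < poch a n := by
  induction n with
  | zero => simp [poch]
  | succ n ih => rw [poch_succ]; positivity

lemma factorial_add_eq (h k : ℕ) :
    ((h + k).factorial : ℝ) = h.factorial * poch ((h : ℝ) + 1) k := by
  induction k with
  | zero => simp [poch]
  | succ k ih =>
    rw [← add_assoc, Nat.factorial_succ, poch_succ]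
    push_cast
    rw [ih]; ring

lemma poch_two_mul (a : ℝ) (n : ℕ) :
    poch a (2*n) = 4^n * poch (a/2) n * poch (a/2 + 1/2) n := by
  induction n with
  | zero => simp [poch]
  | succ n ih =>
    have e : 2*(n+1) = 2*n + 1 + 1 := by ring
    rw [e, poch_succ, poch_succ, ih, poch_succ, poch_succ]
    push_cast
    ring

lemma ratio_eq (h N : ℕ) :
    ((2*N+h).factorial : ℝ) =
      ((N+h).factorial : ℝ) *
        (4^N * (poch ((h:ℝ)/2 + 1/2) N * poch ((h:ℝ)/2 + 1) N / poch ((h:ℝ)+1) N)) := by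
  have e1 : 2*N+h = h + 2*N := by omega
  have e2 : N+h = h + N := by omega
  rw [e1, e2, factorial_add_eq, factorial_add_eq, poch_two_mul ((h:ℝ)+1) N]
  have r1 : ((h:ℝ)+1)/2 = (h:ℝ)/2 + 1/2 := by ring
  rw [r1, show (h:ℝ)/2 + 1/2 + 1/2 = (h:ℝ)/2 + 1 by ring]
  have hp : poch ((h:ℝ)+1) N ≠ 0 := (poch_pos (by positivity) N).ne'
  field_simp

lemma term_eq (h N : ℕ) (x : ℝ) (hx : 0 < x) (A : ℝ) :
    A / (N.factorial * (N+h).factorial) * ((2*N+h).factorial / x ^ (2*N+h+1)) =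
    x ^ (-(h + 1 : ℤ)) *
      (A * (poch ((h:ℝ)/2 + 1/2) N * poch ((h:ℝ)/2 + 1) N / poch ((h:ℝ)+1) N) *
        (4 / x^2) ^ N / N.factorial) := by
  have hx0 : x ≠ 0 := hx.ne'
  have hz : x ^ (-(h + 1 : ℤ)) = (x ^ (h+1))⁻¹ := by
    rw [show (-(h + 1 : ℤ)) = -((h+1 : ℕ) : ℤ) by push_cast; ring, zpow_neg, zpow_natCast]
  rw [hz, ratio_eq h N]
  have hp : poch ((h:ℝ)+1) N ≠ 0 := (poch_pos (by positivity) N).ne'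
  have hN : (N.factorial : ℝ) ≠ 0 := Nat.cast_ne_zero.mpr (Nat.factorial_ne_zero N)
  have hNh : ((N+h).factorial : ℝ) ≠ 0 := Nat.cast_ne_zero.mpr (Nat.factorial_ne_zero _)
  have hxp : x ^ (2*N+h+1) = x ^ (h+1) * (x^2)^N := by
    rw [← pow_mul, ← pow_add]; ring_nf
  rw [hxp]
  field_simp
  have hxx : x ^ (N*2) * x⁻¹ ^ (N*2) = 1 := by rw [← mul_pow, mul_inv_cancel₀ hx0, one_pow]
  linear_combination (-(A * poch (((h:ℝ) + 1) / 2) N * poch (((h:ℝ) + 2) / 2) N * 4 ^ N)) * hxx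

lemma antidiagonalTuple_eq_piAntidiag (d n : ℕ) :
    Finset.Nat.antidiagonalTuple d n = Finset.piAntidiag Finset.univ n := by
  ext p
  simp [Finset.Nat.mem_antidiagonalTuple, Finset.mem_piAntidiag]

lemma sum_multinomial_eq (d n : ℕ) :
    ∑ p ∈ Finset.Nat.antidiagonalTuple d n, Nat.multinomial Finset.univ p = d ^ n := by
  rw [antidiagonalTuple_eq_piAntidiag]
  have key := Finset.sum_pow_eq_sum_piAntidiag (Finset.univ : Finset (Fin d)) (fun _ => (1:ℕ)) n
  simpa using key.symm

lemma multinomial_le (d n : ℕ) (p : Fin d → ℕ) (hp : ∑ j, p j = n) :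
    Nat.multinomial Finset.univ p ≤ d ^ n := by
  rw [← sum_multinomial_eq d n]
  exact Finset.single_le_sum (fun q _ => Nat.zero_le _)
    (Finset.Nat.mem_antidiagonalTuple.mpr hp)

lemma Acoef_le (d : ℕ) (z : Fin d → ℕ) (h : ℕ) (hh : h = ∑ j, z j) (n : ℕ) :
    Acoef d z n ≤ d ^ (2*n+h) := by
  calc Acoef d z n
      ≤ ∑ p ∈ Finset.Nat.antidiagonalTuple d n, Nat.multinomial Finset.univ p * d ^ (n+h) := by
        refine Finset.sum_le_sum fun p hp => ?_
        refine Nat.mul_le_mul_left _ (multinomial_le d (n+h) _ ?_)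
        rw [Finset.sum_add_distrib, Finset.Nat.mem_antidiagonalTuple.mp hp, ← hh]
    _ = d ^ n * d ^ (n+h) := by rw [← Finset.sum_mul, sum_multinomial_eq]
    _ = d ^ (2*n+h) := by rw [← pow_add]; ring_nf

lemma choose_le (n h : ℕ) : (2*n+h).choose n ≤ 2 ^ (2*n+h) := by
  rw [← Nat.sum_range_choose (2*n+h)]
  exact Finset.single_le_sum (fun q _ => Nat.zero_le _)
    (Finset.mem_range.mpr (by omega))

lemma fact_eq_choose_mul (n h : ℕ) :
    (2*n+h).factorial = (2*n+h).choose n * n.factorial * (n+h).factorial := by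
  have := Nat.add_choose_mul_factorial_mul_factorial n (n+h)
  rw [show n + (n+h) = 2*n+h by ring] at this
  rw [Nat.choose_symm_of_eq_add (show 2*n+h = (n+h) + n by ring)] at this
  exact this.symm

lemma inv_fact_sum (d : ℕ) (z : Fin d → ℕ) (h : ℕ) (hh : h = ∑ j, z j) (N : ℕ) :
    ∑ p ∈ Finset.Nat.antidiagonalTuple d N,
        ∏ j, (1 : ℝ) / ((p j).factorial * (p j + z j).factorial) =
      (Acoef d z N : ℝ) / (N.factorial * (N+h).factorial) := by
  rw [Acoef, Nat.cast_sum, Finset.sum_div]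
  refine Finset.sum_congr rfl fun p hp => ?_
  have hsum : ∑ j, p j = N := Finset.Nat.mem_antidiagonalTuple.mp hp
  have h1 : (∏ j, (p j).factorial) * Nat.multinomial Finset.univ p = N.factorial := by
    have := Nat.multinomial_spec Finset.univ p
    rwa [hsum] at this
  have h2 : (∏ j, (p j + z j).factorial) *
      Nat.multinomial Finset.univ (fun j => p j + z j) = (N+h).factorial := by
    have := Nat.multinomial_spec Finset.univ (fun j => p j + z j)
    rwa [Finset.sum_add_distrib, hsum, ← hh] at this
  have h1t : ((∏ j, ((p j).factorial : ℝ))) * (Nat.multinomial Finset.univ p : ℝ)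
      = (N.factorial : ℝ) := by exact_mod_cast congrArg (Nat.cast (R := ℝ)) h1
  have h2t : ((∏ j, (((p j + z j)).factorial : ℝ))) *
      ((Nat.multinomial Finset.univ (fun j => p j + z j)) : ℝ) = ((N+h).factorial : ℝ) := by
    exact_mod_cast congrArg (Nat.cast (R := ℝ)) h2
  have hA : ∀ j : Fin d, ((p j).factorial : ℝ) ≠ 0 :=
    fun j => Nat.cast_ne_zero.mpr (Nat.factorial_ne_zero _)
  have hB : ∀ j : Fin d, (((p j + z j)).factorial : ℝ) ≠ 0 :=
    fun j => Nat.cast_ne_zero.mpr (Nat.factorial_ne_zero _)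
  have hPA : (∏ j, ((p j).factorial : ℝ)) ≠ 0 := Finset.prod_ne_zero_iff.mpr fun j _ => hA j
  have hPB : (∏ j, (((p j + z j)).factorial : ℝ)) ≠ 0 := Finset.prod_ne_zero_iff.mpr fun j _ => hB j
  have hm1 : (Nat.multinomial Finset.univ p : ℝ) ≠ 0 :=
    Nat.cast_ne_zero.mpr (Nat.multinomial_pos _ _).ne'
  have hm2 : ((Nat.multinomial Finset.univ fun j => p j + z j : ℕ) : ℝ) ≠ 0 :=
    Nat.cast_ne_zero.mpr (Nat.multinomial_pos _ _).ne'
  rw [← h1t, ← h2t]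
  push_cast
  rw [Finset.prod_div_distrib]
  simp only [Finset.prod_const_one]
  rw [Finset.prod_mul_distrib]
  field_simp

lemma besselI_two_mul (z : ℕ) (t : ℝ) :
    besselI z (2*t) = ∑' n : ℕ, t ^ (2*n+z) / (n.factorial * (n+z).factorial) := by
  unfold besselI
  rw [mul_div_cancel_left₀ t (two_ne_zero)]

lemma summable_bessel (z : ℕ) (t : ℝ) (ht : 0 ≤ t) :
    Summable (fun n : ℕ => t ^ (2*n+z) / (n.factorial * (n+z).factorial)) := by
  refine Summable.of_nonneg_of_le (fun n => by positivity) (fun n => ?_)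
    ((Real.summable_pow_div_factorial (t^2)).mul_left (t^z))
  have h1 : (0:ℝ) < n.factorial := by positivity
  have h2 : (n.factorial : ℝ) ≤ (n.factorial : ℝ) * ((n+z).factorial) := by
    nth_rewrite 1 [← mul_one (n.factorial : ℝ)]
    exact mul_le_mul_of_nonneg_left (by exact_mod_cast (n+z).factorial_pos) h1.le
  calc t ^ (2*n+z) / ((n.factorial : ℝ) * (n+z).factorial)
      ≤ t ^ (2*n+z) / (n.factorial : ℝ) := by
        apply div_le_div_of_nonneg_left (by positivity) h1 h2
    _ = t^z * ((t^2)^n / n.factorial) := by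
        rw [← pow_mul, show 2*n+z = z + 2*n by ring, pow_add]
        ring

lemma besselI_nonneg (z : ℕ) (t : ℝ) (ht : 0 ≤ t) : 0 ≤ besselI z t :=
  tsum_nonneg fun n => div_nonneg (pow_nonneg (by linarith) _) (by positivity)

lemma prod_tsum_ennreal : ∀ (d : ℕ) (a : Fin d → ℕ → ℝ≥0∞),
    ∏ j, ∑' n, a j n = ∑' p : Fin d → ℕ, ∏ j, a j (p j) := by
  intro d
  induction d with
  | zero =>
    intro a
    rw [tsum_eq_single (fun i => i.elim0) (fun b hb => absurd (Subsingleton.elim b _) hb)]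
    simp
  | succ d ih =>
    intro a
    rw [Fin.prod_univ_succ, ih (fun j n => a j.succ n), ← ENNReal.tsum_mul_right]
    simp_rw [← ENNReal.tsum_mul_left]
    have h1 : ∑' (q : ℕ × (Fin d → ℕ)), a 0 q.1 * ∏ j, a j.succ (q.2 j) =
        ∑' (i : ℕ), ∑' (p : Fin d → ℕ), a 0 i * ∏ j, a j.succ (p j) := ENNReal.tsum_prod'
    rw [← h1, ← Equiv.tsum_eq (Fin.consEquiv (fun _ : Fin (d+1) => ℕ)) (fun p => ∏ j, a j (p j))]
    refine tsum_congr fun q => ?_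
    show a 0 q.1 * ∏ j, a j.succ (q.2 j) = ∏ j, a j ((Fin.consEquiv fun _ => ℕ) q j)
    simp only [Fin.consEquiv_apply]
    rw [Fin.prod_univ_succ]
    simp

lemma tsum_pi_eq (d : ℕ) (g : (Fin d → ℕ) → ℝ≥0∞) :
    ∑' p : Fin d → ℕ, g p = ∑' N : ℕ, ∑ p ∈ Finset.Nat.antidiagonalTuple d N, g p := by
  rw [← Equiv.tsum_eq (Finset.Nat.sigmaAntidiagonalTupleEquivTuple d) g, ENNReal.tsum_sigma']
  exact tsum_congr fun N => Finset.tsum_subtype _ _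

lemma prod_besselI_eq (d : ℕ) (z : Fin d → ℕ) (h : ℕ) (hh : h = ∑ j, z j)
    (t : ℝ) (ht : 0 < t) :
    ENNReal.ofReal (∏ j, besselI (z j) (2*t)) =
      ∑' N : ℕ, ENNReal.ofReal
        ((Acoef d z N : ℝ) * t^(2*N+h) / (N.factorial * (N+h).factorial)) := by
  rw [ENNReal.ofReal_prod_of_nonneg (fun j _ => besselI_nonneg _ _ (by linarith))]
  have hb : ∀ j : Fin d, ENNReal.ofReal (besselI (z j) (2*t)) =
      ∑' n : ℕ, ENNReal.ofReal (t^(2*n + z j) / ((n.factorial : ℝ) * (n + z j).factorial)) := by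
    intro j
    rw [besselI_two_mul,
      ENNReal.ofReal_tsum_of_nonneg (fun n => by positivity) (summable_bessel _ _ ht.le)]
  simp_rw [hb]
  rw [prod_tsum_ennreal d
    (fun j n => ENNReal.ofReal (t^(2*n + z j) / ((n.factorial : ℝ) * (n + z j).factorial)))]
  rw [tsum_pi_eq]
  refine tsum_congr fun N => ?_
  have step1 : ∀ p : Fin d → ℕ,
      (∏ j, ENNReal.ofReal (t^(2*(p j) + z j) / (((p j).factorial : ℝ) * (p j + z j).factorial)))
      = ENNReal.ofReal (∏ j, t^(2*(p j) + z j) / (((p j).factorial : ℝ) * (p j + z j).factorial)) :=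
    fun p => (ENNReal.ofReal_prod_of_nonneg (fun j _ => by positivity)).symm
  simp_rw [step1]
  rw [← ENNReal.ofReal_sum_of_nonneg (fun p _ => Finset.prod_nonneg fun j _ => by positivity)]
  congr 1
  have key : ∀ p ∈ Finset.Nat.antidiagonalTuple d N,
      (∏ j, t^(2*(p j) + z j) / (((p j).factorial : ℝ) * (p j + z j).factorial))
      = t^(2*N+h) * ∏ j, (1:ℝ) / (((p j).factorial : ℝ) * (p j + z j).factorial) := by
    intro p hp
    have hsum : ∑ j, p j = N := Finset.Nat.mem_antidiagonalTuple.mp hp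
    have e1 : (∏ j, t^(2*(p j) + z j)) = t^(2*N+h) := by
      rw [Finset.prod_pow_eq_pow_sum]
      congr 1
      rw [Finset.sum_add_distrib, ← Finset.mul_sum, hsum, ← hh]
    calc (∏ j, t^(2*(p j) + z j) / (((p j).factorial : ℝ) * (p j + z j).factorial))
        = (∏ j, t^(2*(p j) + z j)) * ∏ j, (1:ℝ) / (((p j).factorial : ℝ) * (p j + z j).factorial) := by
          rw [← Finset.prod_mul_distrib]
          exact Finset.prod_congr rfl fun j _ => by ring
      _ = t^(2*N+h) * ∏ j, (1:ℝ) / (((p j).factorial : ℝ) * (p j + z j).factorial) := by rw [e1]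
  rw [Finset.sum_congr rfl key, ← Finset.mul_sum, inv_fact_sum d z h hh N]
  ring

lemma integrable_exp_mul_pow {x : ℝ} (hx : 0 < x) (k : ℕ) :
    IntegrableOn (fun t : ℝ => Real.exp (-x*t) * t^k) (Set.Ioi 0) := by
  have base := integrableOn_rpow_mul_exp_neg_mul_rpow
    (show (-1:ℝ) < (k:ℝ) by linarith [Nat.cast_nonneg (α := ℝ) k]) (zero_lt_one' ℝ) hx
  refine base.congr_fun (fun t ht => ?_) measurableSet_Ioi
  have ht' : (0:ℝ) < t := ht
  beta_reduce
  rw [Real.rpow_one, Real.rpow_natCast]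
  ring

lemma integral_exp_mul_pow {x : ℝ} (hx : 0 < x) (k : ℕ) :
    ∫ t in Set.Ioi (0:ℝ), Real.exp (-x*t) * t^k = k.factorial / x^(k+1) := by
  have base := Real.integral_rpow_mul_exp_neg_mul_Ioi
    (show (0:ℝ) < (k:ℝ) + 1 by positivity) hx
  have congr1 : ∫ t in Set.Ioi (0:ℝ), t ^ (((k:ℝ)+1) - 1) * Real.exp (-(x*t))
      = ∫ t in Set.Ioi (0:ℝ), Real.exp (-x*t) * t^k := by
    refine integral_congr_ae (Filter.Eventually.of_forall fun t => ?_)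
    show t ^ (((k:ℝ)+1) - 1) * Real.exp (-(x*t)) = Real.exp (-x*t) * t^k
    rw [show ((k:ℝ)+1) - 1 = ((k:ℕ):ℝ) by push_cast; ring, Real.rpow_natCast]
    ring_nf
  rw [congr1] at base
  rw [base, Real.Gamma_nat_eq_factorial,
    show ((k:ℝ)+1) = (((k+1:ℕ)):ℝ) by push_cast; ring, Real.rpow_natCast]
  rw [div_pow, one_pow]
  ring

lemma summable_a (d : ℕ) (z : Fin d → ℕ) (h : ℕ) (hh : h = ∑ j, z j)
    (x : ℝ) (hx : 2 * d < x) :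
    Summable (fun N : ℕ => (Acoef d z N : ℝ) / (N.factorial * (N+h).factorial) *
      ((2*N+h).factorial / x ^ (2*N+h+1))) := by
  have hd0 : (0:ℝ) ≤ 2*(d:ℝ) := by positivity
  have hx0 : (0:ℝ) < x := lt_of_le_of_lt hd0 hx
  have hr0 : (0:ℝ) ≤ (2*(d:ℝ)/x)^2 := sq_nonneg _
  have hr1 : (2*(d:ℝ)/x)^2 < 1 :=
    pow_lt_one₀ (div_nonneg hd0 hx0.le) ((div_lt_one hx0).mpr hx) two_ne_zero
  refine Summable.of_nonneg_of_le (fun N => by positivity) (fun N => ?_)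
    ((summable_geometric_of_lt_one hr0 hr1).mul_left ((2*(d:ℝ))^h / x^(h+1)))
  have e1 : (Acoef d z N : ℝ) / (N.factorial * (N+h).factorial) *
      ((2*N+h).factorial / x ^ (2*N+h+1)) =
      ((Acoef d z N * (2*N+h).choose N : ℕ) : ℝ) / x ^ (2*N+h+1) := by
    rw [fact_eq_choose_mul N h]
    have hN : (N.factorial : ℝ) ≠ 0 := Nat.cast_ne_zero.mpr (Nat.factorial_ne_zero N)
    have hNh : ((N+h).factorial : ℝ) ≠ 0 := Nat.cast_ne_zero.mpr (Nat.factorial_ne_zero _)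
    push_cast
    field_simp
  rw [e1]
  have hc : ((Acoef d z N * (2*N+h).choose N : ℕ) : ℝ) ≤ (2*(d:ℝ))^(2*N+h) := by
    have hn : Acoef d z N * (2*N+h).choose N ≤ (2*d)^(2*N+h) := by
      calc Acoef d z N * (2*N+h).choose N ≤ d^(2*N+h) * 2^(2*N+h) :=
            Nat.mul_le_mul (Acoef_le d z h hh N) (choose_le N h)
        _ = (2*d)^(2*N+h) := by rw [mul_pow]; ring
    calc ((Acoef d z N * (2*N+h).choose N : ℕ) : ℝ) ≤ (((2*d)^(2*N+h) : ℕ) : ℝ) := by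
          exact_mod_cast hn
      _ = (2*(d:ℝ))^(2*N+h) := by push_cast; ring
  calc ((Acoef d z N * (2*N+h).choose N : ℕ) : ℝ) / x ^ (2*N+h+1)
      ≤ (2*(d:ℝ))^(2*N+h) / x ^ (2*N+h+1) := by gcongr
    _ = (2*(d:ℝ))^h / x^(h+1) * ((2*(d:ℝ)/x)^2)^N := by
        rw [div_pow]
        field_simp
        rw [div_pow, mul_div_assoc', eq_div_iff (by positivity)]
        rw [← mul_pow, ← pow_mul, ← pow_mul]
        ring

/-- Laplace transform of a product of Bessel functions: for `z ∈ (ℤ≥0)^d`,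
`h = z_1+⋯+z_d` and real `x > 2d`,
`∫_0^∞ e^{-xt} ∏_j I_{z_j}(2t) dt
  = x^{-(h+1)} ∑_{n≥0} A(n) ((h/2+1/2)_n (h/2+1)_n/(h+1)_n) (4/x²)^n/n!`. -/
theorem laplace_prod_besselI (d : ℕ) (z : Fin d → ℕ) (h : ℕ) (hh : h = ∑ j, z j)
    (x : ℝ) (hx : 2 * d < x) :
    ∫ t in Set.Ioi (0 : ℝ), Real.exp (-x * t) * ∏ j, besselI (z j) (2 * t) =
      x ^ (-(h + 1 : ℤ)) *
        ∑' n : ℕ, (Acoef d z n : ℝ) *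
          (poch ((h : ℝ) / 2 + 1 / 2) n * poch ((h : ℝ) / 2 + 1) n / poch ((h : ℝ) + 1) n) *
          (4 / x ^ 2) ^ n / n.factorial := by
  have hd0 : (0:ℝ) ≤ 2*(d:ℝ) := by positivity
  have hx0 : (0:ℝ) < x := lt_of_le_of_lt hd0 hx
  set μ := volume.restrict (Set.Ioi (0:ℝ)) with hμ
  set a : ℕ → ℝ := fun N => (Acoef d z N : ℝ) / (N.factorial * (N+h).factorial) *
    ((2*N+h).factorial / x ^ (2*N+h+1)) with ha_def
  have ha_nonneg : ∀ N, 0 ≤ a N := fun N => by positivity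
  have hsum : Summable a := summable_a d z h hh x hx
  set f : ℕ → ℝ → ℝ := fun N t => Real.exp (-x*t) *
    ((Acoef d z N : ℝ) * t^(2*N+h) / (N.factorial * (N+h).factorial)) with hf_def
  set g : ℕ → ℝ → ℝ≥0∞ := fun N t => ENNReal.ofReal (f N t) with hg_def
  have hgmeas : ∀ N, Measurable (g N) := by
    intro N
    apply Measurable.ennreal_ofReal
    exact ((measurable_id.const_mul (-x)).exp).mul
      (((measurable_id.pow_const _).const_mul _).div_const _)
  have hFnn : ∀ t ∈ Set.Ioi (0:ℝ), 0 ≤ Real.exp (-x*t) * ∏ j, besselI (z j) (2*t) := by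
    intro t ht
    have ht' : (0:ℝ) < t := ht
    exact mul_nonneg (Real.exp_nonneg _)
      (Finset.prod_nonneg fun j _ => besselI_nonneg _ _ (by linarith))
  have key : ∀ t ∈ Set.Ioi (0:ℝ),
      ENNReal.ofReal (Real.exp (-x*t) * ∏ j, besselI (z j) (2*t)) = ∑' N, g N t := by
    intro t ht
    rw [ENNReal.ofReal_mul (Real.exp_nonneg _), prod_besselI_eq d z h hh t ht,
      ← ENNReal.tsum_mul_left]
    exact tsum_congr fun N => (ENNReal.ofReal_mul (Real.exp_nonneg _)).symm
  have hmem : ∀ᵐ t ∂μ, t ∈ Set.Ioi (0:ℝ) := ae_restrict_mem measurableSet_Ioi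
  have key_ae : (fun t => ENNReal.ofReal (Real.exp (-x*t) * ∏ j, besselI (z j) (2*t)))
      =ᵐ[μ] fun t => ∑' N, g N t := hmem.mono fun t ht => key t ht
  have hGmeas : Measurable (fun t => ∑' N, g N t) := Measurable.ennreal_tsum hgmeas
  have hF_meas : AEStronglyMeasurable
      (fun t => Real.exp (-x*t) * ∏ j, besselI (z j) (2*t)) μ := by
    refine (hGmeas.ennreal_toReal.stronglyMeasurable.aestronglyMeasurable).congr ?_
    refine hmem.mono fun t ht => ?_
    show (∑' N, g N t).toReal = Real.exp (-x*t) * ∏ j, besselI (z j) (2*t)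
    rw [← key t ht, ENNReal.toReal_ofReal (hFnn t ht)]
  have hF_nn : 0 ≤ᵐ[μ] fun t => Real.exp (-x*t) * ∏ j, besselI (z j) (2*t) :=
    hmem.mono fun t ht => hFnn t ht
  rw [show (∫ t in Set.Ioi (0:ℝ), Real.exp (-x * t) * ∏ j, besselI (z j) (2 * t))
      = ∫ t, Real.exp (-x*t) * ∏ j, besselI (z j) (2*t) ∂μ from rfl]
  rw [integral_eq_lintegral_of_nonneg_ae hF_nn hF_meas]
  rw [lintegral_congr_ae key_ae, lintegral_tsum (fun N => (hgmeas N).aemeasurable)]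
  have hint : ∀ N, ∫⁻ t, g N t ∂μ = ENNReal.ofReal (a N) := by
    intro N
    have hfi : Integrable (f N) μ := by
      have base := (integrable_exp_mul_pow hx0 (2*N+h)).const_mul
        ((Acoef d z N : ℝ) / (N.factorial * (N+h).factorial))
      exact base.congr (Filter.Eventually.of_forall fun t => by
        simp only [hf_def]; ring)
    have hfnn : 0 ≤ᵐ[μ] f N := by
      refine hmem.mono fun t ht => ?_
      have ht' : (0:ℝ) < t := ht
      have : (0:ℝ) ≤ t^(2*N+h) := pow_nonneg ht'.le _
      simp only [hf_def]
      positivity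
    rw [← ofReal_integral_eq_lintegral_ofReal hfi hfnn]
    congr 1
    have e2 : ∫ t, f N t ∂μ = ((Acoef d z N : ℝ)/(N.factorial * (N+h).factorial)) *
        ∫ t, Real.exp (-x*t) * t^(2*N+h) ∂μ := by
      rw [← integral_const_mul]
      exact integral_congr_ae (Filter.Eventually.of_forall fun t => by
        simp only [hf_def]; ring)
    rw [e2, show (∫ t, Real.exp (-x*t) * t^(2*N+h) ∂μ)
        = ∫ t in Set.Ioi (0:ℝ), Real.exp (-x*t) * t^(2*N+h) from rfl,
      integral_exp_mul_pow hx0]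
  simp_rw [hint]
  rw [← ENNReal.ofReal_tsum_of_nonneg ha_nonneg hsum,
    ENNReal.toReal_ofReal (tsum_nonneg ha_nonneg)]
  rw [← tsum_mul_left]
  exact tsum_congr fun N => term_eq h N x hx0 _
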